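/- Let ∇ be the connection on the free module with basis ω, η over K((t)) defined by ∇(ω) = −(dt/3t)·ω + (dt/(12(t²−t)))·η and ∇(η) = (4dt/3t)·ω + (dt/3t)·η. Set F(t) = (1/(2√−3))·₂F₁(1/3,2/3;1;t), ω̂ := F(t)^{−1}·ω, and η̂ := 4(1−t)(F(t)+3tF'(t))·ω + F(t)·η. Then ∇(ω̂) = (dt/(12(t²−t)F(t)²)) ⊗ η̂ and ∇(η̂) = 0. -/

import Mathlib

/-!
**STATEMENT 13.** Let `∇` be the connection on the free module with basis `ω, η` over
`K((t))` defined by `∇(ω) = -(dt/3t)·ω + (dt/(12(t²-t)))·η` and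
`∇(η) = (4dt/3t)·ω + (dt/3t)·η`.  Set `F(t) = (1/(2√-3))·₂F₁(1/3,2/3;1;t)`,
`ω̂ := F(t)⁻¹·ω` and `η̂ := 4(1-t)(F(t)+3tF'(t))·ω + F(t)·η`.  Then
`∇(ω̂) = (dt/(12(t²-t)F(t)²)) ⊗ η̂` and `∇(η̂) = 0`.

After clearing the denominators (multiplying by the invertible elements `3t`,
`12t(t-1)`, `12t(t-1)F²` of `K((t))`), the two assertions are equivalent to the following
three identities of power series, where `G := 4(1-t)(F + 3tF')` is the `ω`-coordinate of
`η̂`: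
 * `∇(η̂) = 0`, `ω`-component: `3t·G' - G + 4F = 0`;
 * `∇(η̂) = 0`, `η`-component: `12t(t-1)·F' + G + 4(t-1)·F = 0`;
 * `∇(ω̂) = (dt/(12(t²-t)F²)) ⊗ η̂`, `ω`-component: `12t(t-1)F²·(F⁻¹)' - 4(t-1)F = G`
   (the `η`-component being the identity `F⁻¹·F² = F`).
-/

open PowerSeries

variable (K : Type*) [Field K] [CharZero K]

/-- `F = (1/(2s))·₂F₁(1/3, 2/3; 1; t)` where `s = √-3`. -/
noncomputable def hypFs (s : K) : PowerSeries K :=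
  PowerSeries.mk fun n =>
    (2 * s)⁻¹ * ((ascPochhammer K n).eval (3⁻¹) * (ascPochhammer K n).eval (2 / 3)) /
      ((n.factorial : K) * (n.factorial : K))

/-- `G = 4(1-t)(F + 3t·F')`, the `ω`-coordinate of `η̂`. -/
noncomputable def etaHatCoord (s : K) : PowerSeries K :=
  4 * (1 - X) * (hypFs K s + 3 * X * derivative K (hypFs K s))

lemma hypFs_rec (s : K) (n : ℕ) :
    ((n : K) + 1) ^ 2 * coeff (n + 1) (hypFs K s)
      = ((n : K) + 3⁻¹) * ((n : K) + 2 / 3) * coeff n (hypFs K s) := by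
  have hf : ((n.factorial : K)) ≠ 0 := Nat.cast_ne_zero.mpr n.factorial_ne_zero
  have hn : ((n : K) + 1) ≠ 0 := Nat.cast_add_one_ne_zero n
  have hd1 : (((n : K) + 1) * n.factorial) * (((n : K) + 1) * n.factorial) ≠ 0 :=
    mul_ne_zero (mul_ne_zero hn hf) (mul_ne_zero hn hf)
  have hd0 : ((n.factorial : K)) * n.factorial ≠ 0 := mul_ne_zero hf hf
  simp only [hypFs, coeff_mk, ascPochhammer_succ_eval, Nat.factorial_succ, Nat.cast_mul]
  push_cast
  rw [← mul_div_assoc, ← mul_div_assoc, div_eq_div_iff hd1 hd0]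
  ring

lemma hypFs_ode (s : K) :
    9 * ((X : PowerSeries K) * derivative K (derivative K (hypFs K s)))
      - 9 * ((X : PowerSeries K) * ((X : PowerSeries K) * derivative K (derivative K (hypFs K s))))
      + 9 * derivative K (hypFs K s)
      - 18 * ((X : PowerSeries K) * derivative K (hypFs K s))
      - 2 * hypFs K s = 0 := by
  have h9 : (9 : PowerSeries K) = C 9 := (map_ofNat C 9).symm
  have h18 : (18 : PowerSeries K) = C 18 := (map_ofNat C 18).symm
  have h2 : (2 : PowerSeries K) = C 2 := (map_ofNat C 2).symm
  ext n
  rw [h9, h18, h2]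
  match n with
  | 0 =>
    have hrec := hypFs_rec K s 0
    simp only [map_sub, map_add, coeff_C_mul, coeff_zero_X_mul, coeff_derivative,
      map_zero, coeff_zero_eq_constantCoeff] at *
    push_cast at hrec ⊢
    linear_combination (9 : K) * hrec
  | 1 =>
    have hrec := hypFs_rec K s 1
    simp only [map_sub, map_add, coeff_C_mul, coeff_succ_X_mul, coeff_zero_X_mul,
      coeff_derivative, map_zero] at *
    push_cast at hrec ⊢
    linear_combination (9 : K) * hrec
  | (n + 2) =>
    have hrec := hypFs_rec K s (n + 2)
    simp only [map_sub, map_add, coeff_C_mul, coeff_succ_X_mul, coeff_derivative,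
      map_zero] at *
    push_cast at hrec ⊢
    linear_combination (9 : K) * hrec

omit [CharZero K] in
lemma derivative_ofNat (n : ℕ) [n.AtLeastTwo] :
    derivative K (OfNat.ofNat n : PowerSeries K) = 0 := by
  rw [← map_ofNat C n]; exact derivative_C

lemma derivative_etaHatCoord (s : K) :
    derivative K (etaHatCoord K s)
      = 4 * (1 - X) * (4 * derivative K (hypFs K s)
          + 3 * X * derivative K (derivative K (hypFs K s)))
        - 4 * (hypFs K s + 3 * X * derivative K (hypFs K s)) := by
  rw [etaHatCoord]
  simp only [Derivation.leibniz, smul_eq_mul, map_add, map_sub, derivative_X,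
    derivative_ofNat K 3, derivative_ofNat K 4, Derivation.map_one_eq_zero]
  ring

theorem gaussManin_symplectic_basis (s : K) (hs : s * s = -3) :
    -- `∇(η̂) = 0`:
    (3 * (X : PowerSeries K) * derivative K (etaHatCoord K s) - etaHatCoord K s +
        4 * hypFs K s = 0) ∧
    (12 * (X : PowerSeries K) * (X - 1) * derivative K (hypFs K s) + etaHatCoord K s +
        4 * (X - 1) * hypFs K s = 0) ∧
    -- `∇(ω̂) = (dt/(12(t²-t)F²)) ⊗ η̂`:
    (12 * (X : PowerSeries K) * (X - 1) * hypFs K s ^ 2 * derivative K (hypFs K s)⁻¹ -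
        4 * (X - 1) * hypFs K s = etaHatCoord K s) := by
  have ode := hypFs_ode K s
  refine ⟨?_, ?_, ?_⟩
  · rw [derivative_etaHatCoord, etaHatCoord]
    linear_combination (4 * (X : PowerSeries K)) * ode
  · rw [etaHatCoord]; ring
  · have hs0 : s ≠ 0 := by rintro rfl; norm_num at hs
    have hc : constantCoeff (hypFs K s) ≠ 0 := by
      simpa [hypFs] using hs0
    have hinv : hypFs K s * (hypFs K s)⁻¹ = 1 := PowerSeries.mul_inv_cancel _ hc
    have hd := congrArg (derivative K) hinv
    rw [Derivation.leibniz, smul_eq_mul, smul_eq_mul, Derivation.map_one_eq_zero] at hd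
    rw [etaHatCoord]
    linear_combination (12 * (X : PowerSeries K) * ((X : PowerSeries K) - 1) * hypFs K s) * hd
      - (12 * (X : PowerSeries K) * ((X : PowerSeries K) - 1) * derivative K (hypFs K s)) * hinv
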